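/- Let A ⊆ ℕ be a WM set and let p_1, p_2 ∈ ℤ[n] have positive leading coefficients with deg p_1 ≤ deg p_2 − 2 and with p_2(n) ≥ p_1(n) ≥ 1 for all n ∈ ℕ. Then A' = A \ ⋃_{n ∈ ℕ} {m ∈ ℕ : p_2(n) − p_1(n) ≤ m ≤ p_2(n)} is a WM set, and there is no quadruple (z, x, y_1, y_2) with x, y_1, y_2 ∈ A', x + y_1 = p_1(z) and x + y_2 = p_2(z). -/

import Mathlib

open MeasureTheory Filter Topology Polynomial

/-- The space `Ω = {0,1}^ℕ`. -/
abbrev Omega : Type := ℕ → Bool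

/-- The shift map `(Tω)ₙ = ω_{n+1}`. -/
def shift : Omega → Omega := fun ω n => ω (n + 1)

open Classical in
/-- The indicator sequence `ξ = 1_S ∈ Ω` of a set `S ⊆ ℕ`. -/
noncomputable def indicatorSeq (S : Set ℕ) : Omega := fun n => decide (n ∈ S)

/-- The orbit closure `X_ξ` of a point `ξ ∈ Ω` under the shift. -/
def orbitClosure (ξ : Omega) : Set Omega := closure {ω | ∃ n : ℕ, shift^[n] ξ = ω}

open Classical in
/-- The number of elements of `S` in the interval `[a, b]`. -/
noncomputable def countIn (S : Set ℕ) (a b : ℕ) : ℕ :=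
  ((Finset.Icc a b).filter (fun n => n ∈ S)).card

/-- `S ⊆ ℕ` has density `δ`: `(1/N)|S ∩ [1,N]| → δ`. -/
def HasDensity (S : Set ℕ) (δ : ℝ) : Prop :=
  Tendsto (fun N : ℕ => (countIn S 1 N : ℝ) / N) atTop (𝓝 δ)

/-- The upper density of `S ⊆ ℕ`: `limsup (1/N)|S ∩ [1,N]|`. -/
noncomputable def upperDensity (S : Set ℕ) : ℝ :=
  limsup (fun N : ℕ => (countIn S 1 N : ℝ) / N) atTop

/-- `ξ` is a generic point for the measure `μ`: Birkhoff averages of every continuous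
function converge to the integral. -/
def IsGeneric (ξ : Omega) (μ : Measure Omega) : Prop :=
  ∀ f : C(Omega, ℝ),
    Tendsto (fun N : ℕ => (∑ n ∈ Finset.range N, f (shift^[n] ξ)) / N) atTop
      (𝓝 (∫ x, f x ∂μ))

/-- `A ⊆ ℕ` is a WM set: it has positive density and `1_A` is generic for a shift-invariant
Borel probability measure `μ` supported on the orbit closure `X_{1_A}` such that the
product system `(X × X, μ × μ, T × T)` is ergodic (weak mixing). -/
def IsWMSet (A : Set ℕ) : Prop :=
  (∃ δ : ℝ, 0 < δ ∧ HasDensity A δ) ∧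
  ∃ (μ : Measure Omega) (_ : IsProbabilityMeasure μ),
    μ (orbitClosure (indicatorSeq A)) = 1 ∧
    IsGeneric (indicatorSeq A) μ ∧
    Ergodic (fun x : Omega × Omega => (shift x.1, shift x.2)) (μ.prod μ)

lemma shift_iter (ω : Omega) (n k : ℕ) : shift^[n] ω k = ω (k + n) := by
  induction n generalizing ω k with
  | zero => rfl
  | succ n ih =>
    rw [Function.iterate_succ_apply]
    rw [ih (shift ω) k]
    simp [shift]
    ring_nf

def Cyl (ω : Omega) (L : ℕ) : Set Omega := {ω' | ∀ k < L, ω' k = ω k}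

lemma isOpen_Cyl (ω : Omega) (L : ℕ) : IsOpen (Cyl ω L) := by
  have : Cyl ω L = ⋂ k : Fin L, (fun ω' : Omega => ω' k) ⁻¹' {ω k} := by
    ext ω'; simp [Cyl]
    constructor
    · intro h k; exact h k k.2
    · intro h k hk; exact h ⟨k, hk⟩
  rw [this]
  exact isOpen_iInter_of_finite fun k => (continuous_apply (k : ℕ)).isOpen_preimage _ (isOpen_discrete _)

lemma mem_Cyl_self (ω : Omega) (L : ℕ) : ω ∈ Cyl ω L := fun _ _ => rfl

lemma exists_cyl_subset {U : Set Omega} (hU : IsOpen U) {ω : Omega} (hω : ω ∈ U) :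
    ∃ L, Cyl ω L ⊆ U := by
  obtain ⟨I, u, hu, hsub⟩ := isOpen_pi_iff.mp hU ω hω
  refine ⟨I.sup id + 1, fun ω' hω' => hsub fun i hi => ?_⟩
  have : i < I.sup id + 1 := Nat.lt_succ_of_le (Finset.le_sup (f := id) hi)
  rw [hω' i this]
  exact (hu i hi).2

lemma window_bound (f : C(Omega, ℝ)) {ε : ℝ} (hε : 0 < ε) :
    ∃ L, ∀ ω ω' : Omega, (∀ k < L, ω k = ω' k) → |f ω - f ω'| ≤ ε := by
  have hopen : ∀ ω : Omega, ∃ L, Cyl ω L ⊆ f ⁻¹' Metric.ball (f ω) (ε/2) := by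
    intro ω
    exact exists_cyl_subset (f.continuous.isOpen_preimage _ Metric.isOpen_ball)
      (by simp [half_pos hε])
  choose Lf hLf using hopen
  obtain ⟨t, ht⟩ := IsCompact.elim_finite_subcover isCompact_univ
    (fun ω => Cyl ω (Lf ω)) (fun ω => isOpen_Cyl _ _)
    (fun ω _ => Set.mem_iUnion.mpr ⟨ω, mem_Cyl_self _ _⟩)
  refine ⟨t.sup Lf, fun ω ω' hagree => ?_⟩
  obtain ⟨ω₀, hω₀t, hωmem⟩ := by
    have := ht (Set.mem_univ ω)
    simpa using this
  have hL : Lf ω₀ ≤ t.sup Lf := Finset.le_sup hω₀t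
  have hω'mem : ω' ∈ Cyl ω₀ (Lf ω₀) := by
    intro k hk
    rw [← hagree k (lt_of_lt_of_le hk hL)]
    exact hωmem k hk
  have h1 := hLf ω₀ hωmem
  have h2 := hLf ω₀ hω'mem
  simp only [Set.mem_preimage, Metric.mem_ball, Real.dist_eq] at h1 h2
  calc |f ω - f ω'| ≤ |f ω - f ω₀| + |f ω₀ - f ω'| := abs_sub_le _ _ _
    _ ≤ ε/2 + ε/2 := add_le_add h1.le (by rw [abs_sub_comm]; exact h2.le)
    _ = ε := by ring

lemma poly_upper (p : Polynomial ℤ) :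
    ∃ C : ℕ, ∀ n : ℕ, |p.eval (n : ℤ)| ≤ (C : ℤ) * ((n : ℤ) + 1) ^ p.natDegree := by
  refine ⟨∑ i ∈ Finset.range (p.natDegree + 1), (p.coeff i).natAbs, fun n => ?_⟩
  rw [Polynomial.eval_eq_sum_range]
  calc |∑ i ∈ Finset.range (p.natDegree + 1), p.coeff i * (n : ℤ) ^ i|
      ≤ ∑ i ∈ Finset.range (p.natDegree + 1), |p.coeff i * (n : ℤ) ^ i| :=
        Finset.abs_sum_le_sum_abs _ _
    _ ≤ ∑ i ∈ Finset.range (p.natDegree + 1), ((p.coeff i).natAbs : ℤ) * ((n:ℤ)+1) ^ p.natDegree := by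
        refine Finset.sum_le_sum fun i hi => ?_
        rw [abs_mul, Int.abs_eq_natAbs]
        refine mul_le_mul le_rfl ?_ (abs_nonneg _) (by positivity)
        rw [abs_pow, abs_of_nonneg (by positivity : (0:ℤ) ≤ (n:ℤ))]
        calc (n:ℤ) ^ i ≤ ((n:ℤ)+1) ^ i := pow_le_pow_left₀ (by positivity) (by linarith) i
          _ ≤ ((n:ℤ)+1) ^ p.natDegree :=
              pow_le_pow_right₀ (by linarith) (Nat.lt_succ_iff.mp (Finset.mem_range.mp hi))
    _ = (↑(∑ i ∈ Finset.range (p.natDegree + 1), (p.coeff i).natAbs) : ℤ) * ((n:ℤ)+1) ^ p.natDegree := by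
        rw [← Finset.sum_mul]; push_cast; ring

lemma poly_lower (q : Polynomial ℤ) (hlead : 0 < q.leadingCoeff) (hdeg : 1 ≤ q.natDegree) :
    ∃ n₀ : ℕ, ∀ n : ℕ, n₀ ≤ n → (n : ℤ) ^ q.natDegree ≤ 2 * q.eval (n : ℤ) := by
  set d := q.natDegree with hd
  set C : ℕ := ∑ i ∈ Finset.range d, (q.coeff i).natAbs with hC
  refine ⟨2 * C + 1, fun n hn => ?_⟩
  have hn1 : (1 : ℤ) ≤ (n : ℤ) := by exact_mod_cast Nat.one_le_iff_ne_zero.mpr (by omega)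
  have heval : q.eval (n : ℤ) = (∑ i ∈ Finset.range d, q.coeff i * (n:ℤ) ^ i)
      + q.leadingCoeff * (n:ℤ) ^ d := by
    rw [Polynomial.eval_eq_sum_range, Finset.sum_range_succ, Polynomial.coeff_natDegree]
  have htail : |∑ i ∈ Finset.range d, q.coeff i * (n:ℤ) ^ i| ≤ (C : ℤ) * (n:ℤ) ^ (d - 1) := by
    calc |∑ i ∈ Finset.range d, q.coeff i * (n:ℤ) ^ i|
        ≤ ∑ i ∈ Finset.range d, |q.coeff i * (n:ℤ) ^ i| := Finset.abs_sum_le_sum_abs _ _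
      _ ≤ ∑ i ∈ Finset.range d, ((q.coeff i).natAbs : ℤ) * (n:ℤ) ^ (d-1) := by
          refine Finset.sum_le_sum fun i hi => ?_
          rw [abs_mul, Int.abs_eq_natAbs, abs_pow, abs_of_nonneg (by positivity : (0:ℤ) ≤ (n:ℤ))]
          exact mul_le_mul le_rfl (pow_le_pow_right₀ hn1 (by have := Finset.mem_range.mp hi; omega))
            (by positivity) (by positivity)
      _ = (C : ℤ) * (n:ℤ) ^ (d-1) := by rw [← Finset.sum_mul, hC]; push_cast; ring
  have hlead1 : (1 : ℤ) ≤ q.leadingCoeff := hlead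
  have h1 : q.eval (n:ℤ) ≥ (n:ℤ)^d - (C:ℤ) * (n:ℤ)^(d-1) := by
    rw [heval]
    have : q.leadingCoeff * (n:ℤ)^d ≥ 1 * (n:ℤ)^d :=
      mul_le_mul_of_nonneg_right hlead1 (by positivity)
    have h2 : (∑ i ∈ Finset.range d, q.coeff i * (n:ℤ) ^ i) ≥ -((C:ℤ) * (n:ℤ)^(d-1)) :=
      neg_le_of_abs_le htail
    nlinarith [h2, this]
  have hpow : (n:ℤ)^d = (n:ℤ)^(d-1) * (n:ℤ) := by
    rw [← pow_succ]; congr 1; omega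
  have hnC : (2*C : ℤ) ≤ (n:ℤ) := by exact_mod_cast (by omega : 2*C ≤ n)
  have hpownonneg : (0:ℤ) ≤ (n:ℤ)^(d-1) := by positivity
  nlinarith [h1, mul_le_mul_of_nonneg_left hnC hpownonneg]

lemma count_bound (p₁ p₂ : Polynomial ℤ)
    (hlead₂ : 0 < p₂.leadingCoeff)
    (hdeg : p₁.natDegree + 2 ≤ p₂.natDegree)
    (hpos : ∀ n : ℕ, 1 ≤ p₁.eval (n : ℤ) ∧ p₁.eval (n : ℤ) ≤ p₂.eval (n : ℤ))
    (L : ℕ) :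
    ∃ C : ℕ, 0 < C ∧ ∀ N : ℕ, L ≤ N → 1 ≤ N →
      (countIn {m : ℕ | ∃ j : ℕ,
          p₂.eval (j : ℤ) - p₁.eval (j : ℤ) - L ≤ (m : ℤ) ∧ (m : ℤ) ≤ p₂.eval (j : ℤ)} 1 N)
        ^ p₂.natDegree ≤ C * N ^ (p₂.natDegree - 1) := by
  classical
  set SL : Set ℕ := {m : ℕ | ∃ j : ℕ,
      p₂.eval (j : ℤ) - p₁.eval (j : ℤ) - L ≤ (m : ℤ) ∧ (m : ℤ) ≤ p₂.eval (j : ℤ)} with hSL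
  set d₁ := p₁.natDegree
  set d₂ := p₂.natDegree with hd₂
  have hd₂pos : 1 ≤ d₂ := by omega
  set q : Polynomial ℤ := p₂ - p₁ with hq
  have hp₂ne : p₂ ≠ 0 := fun h => by simp [h] at hlead₂
  have hdeglt : p₁.degree < p₂.degree := by
    apply Polynomial.degree_lt_degree
    omega
  have hqdeg : q.natDegree = d₂ := by
    rw [hq, Polynomial.natDegree_sub_eq_left_of_natDegree_lt (by omega : p₁.natDegree < p₂.natDegree)]
  have hqlead : 0 < q.leadingCoeff := by
    rw [hq, Polynomial.leadingCoeff_sub_of_degree_lt hdeglt]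
    exact hlead₂
  obtain ⟨C₁, hC₁⟩ := poly_upper p₁
  obtain ⟨n₀, hn₀⟩ := poly_lower q hqlead (by omega)
  rw [hqdeg] at hn₀
  have hqeval : ∀ j : ℕ, q.eval (j : ℤ) = p₂.eval (j:ℤ) - p₁.eval (j:ℤ) := by
    intro j; rw [hq]; simp
  set C₆ : ℕ := (n₀+1)^d₂ * 4^d₂ * 4 with hC₆
  refine ⟨(C₁ + L + 1)^d₂ * C₆^(d₂-1) + 1, Nat.succ_pos _, fun N hLN hN => ?_⟩
  set K : ℕ := 2*(N+L) with hK
  have hKN : K ≤ 4*N := by omega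
  have hex : ∃ R : ℕ, K ≤ (R+1)^d₂ := ⟨K, le_trans (by omega) (Nat.le_self_pow (by omega) _)⟩
  set R := Nat.find hex with hR
  have hRK : K ≤ (R+1)^d₂ := Nat.find_spec hex
  have hRbound : (R+1)^d₂ ≤ 2^d₂ * K := by
    rcases Nat.eq_zero_or_pos R with h0 | hpos'
    · rw [h0]
      simpa using Nat.mul_le_mul Nat.one_le_two_pow (by omega : 1 ≤ K)
    · have hmin : ¬ K ≤ ((R-1)+1)^d₂ := Nat.find_min hex (by omega)
      have : R^d₂ < K := by
        have : (R-1)+1 = R := by omega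
        rw [this] at hmin; omega
      calc (R+1)^d₂ ≤ (2*R)^d₂ := Nat.pow_le_pow_left (by omega) _
        _ = 2^d₂ * R^d₂ := by rw [mul_pow]
        _ ≤ 2^d₂ * K := Nat.mul_le_mul_left _ (by omega)
  set V : ℕ := max n₀ (R+1) with hV
  set W : ℕ := V + 1 with hW
  have hWle : W ≤ (n₀+1) * (R+2) := by
    have : V ≤ n₀ + R + 1 := by omega
    nlinarith
  have hWpow : W^d₂ ≤ C₆ * N := by
    calc W^d₂ ≤ ((n₀+1) * (R+2))^d₂ := Nat.pow_le_pow_left hWle _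
      _ = (n₀+1)^d₂ * (R+2)^d₂ := by rw [mul_pow]
      _ ≤ (n₀+1)^d₂ * (2*(R+1))^d₂ := Nat.mul_le_mul_left _ (Nat.pow_le_pow_left (by omega) _)
      _ = (n₀+1)^d₂ * (2^d₂ * (R+1)^d₂) := by rw [mul_pow]
      _ ≤ (n₀+1)^d₂ * (2^d₂ * (2^d₂ * K)) := Nat.mul_le_mul_left _ (Nat.mul_le_mul_left _ hRbound)
      _ ≤ (n₀+1)^d₂ * (2^d₂ * (2^d₂ * (4*N))) := by
          exact Nat.mul_le_mul_left _ (Nat.mul_le_mul_left _ (Nat.mul_le_mul_left _ hKN))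
      _ = ((n₀+1)^d₂ * 4^d₂ * 4) * N := by
          rw [show (4:ℕ)^d₂ = 2^d₂ * 2^d₂ by rw [← mul_pow]; norm_num]; ring
  -- the count is bounded by the biUnion
  set T : Finset ℕ := (Finset.range W).biUnion
    (fun j => Finset.Icc (Int.toNat (q.eval (j:ℤ) - L)) (Int.toNat (p₂.eval (j:ℤ)))) with hT
  have hsub : ((Finset.Icc 1 N).filter (fun m => m ∈ SL)) ⊆ T := by
    intro m hm
    rw [Finset.mem_filter] at hm
    obtain ⟨hmIcc, j, h1, h2⟩ := hm
    rw [Finset.mem_Icc] at hmIcc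
    have h1' : q.eval (j:ℤ) - L ≤ (m:ℤ) := by rw [hqeval]; linarith
    have hjW : j < W := by
      rcases le_or_gt n₀ j with hj | hj
      · have := hn₀ j hj
        have hqm : 2 * q.eval (j:ℤ) ≤ 2*((m:ℤ) + L) := by linarith
        have hjK : (j:ℤ)^d₂ ≤ (K:ℤ) := by
          rw [hK]; push_cast
          have : (m:ℤ) ≤ N := by exact_mod_cast hmIcc.2
          linarith
        have hjKn : j^d₂ ≤ K := by exact_mod_cast hjK
        have : j^d₂ ≤ (R+1)^d₂ := le_trans hjKn hRK
        have hjR : j ≤ R+1 := by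
          by_contra hc
          exact absurd this (not_le.mpr (Nat.pow_lt_pow_left (by omega) (by omega)))
        omega
      · omega
    rw [hT, Finset.mem_biUnion]
    refine ⟨j, Finset.mem_range.mpr hjW, Finset.mem_Icc.mpr ⟨?_, ?_⟩⟩
    · exact Int.toNat_le.mpr h1'
    · rw [Int.le_toNat (by linarith [(hpos j).1, (hpos j).2])]
      exact h2
  have hcard : countIn SL 1 N ≤ (C₁ + L + 1) * W^(d₁+1) := by
    have h1 : countIn SL 1 N ≤ T.card := by
      apply Finset.card_le_card
      convert hsub using 2
    refine le_trans h1 (le_trans (Finset.card_biUnion_le) ?_)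
    have hterm : ∀ j ∈ Finset.range W,
        (Finset.Icc (Int.toNat (q.eval (j:ℤ) - L)) (Int.toNat (p₂.eval (j:ℤ)))).card
          ≤ C₁ * W^d₁ + L + 1 := by
      intro j hj
      rw [Nat.card_Icc]
      have hp₁bound : Int.toNat (p₁.eval (j:ℤ)) ≤ C₁ * (j+1)^d₁ := by
        rw [Int.toNat_le]
        push_cast
        calc p₁.eval (j:ℤ) ≤ |p₁.eval (j:ℤ)| := le_abs_self _
          _ ≤ (C₁:ℤ) * ((j:ℤ)+1)^d₁ := hC₁ j
      have hkey : Int.toNat (p₂.eval (j:ℤ)) ≤ Int.toNat (p₁.eval (j:ℤ)) + L + Int.toNat (q.eval (j:ℤ) - L) := by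
        rw [Int.toNat_le]
        push_cast
        have e1 := Int.self_le_toNat (p₁.eval (j:ℤ))
        have e2 := Int.self_le_toNat (q.eval (j:ℤ) - L)
        have := hqeval j
        linarith
      have hjW' : (j+1)^d₁ ≤ W^d₁ := Nat.pow_le_pow_left (by
        have := Finset.mem_range.mp hj; omega) _
      have : Int.toNat (p₁.eval (j:ℤ)) ≤ C₁ * W^d₁ :=
        le_trans hp₁bound (Nat.mul_le_mul_left _ hjW')
      omega
    calc (∑ j ∈ Finset.range W,
        (Finset.Icc (Int.toNat (q.eval (j:ℤ) - L)) (Int.toNat (p₂.eval (j:ℤ)))).card)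
        ≤ ∑ _j ∈ Finset.range W, (C₁ * W^d₁ + L + 1) := Finset.sum_le_sum hterm
      _ = W * (C₁ * W^d₁ + L + 1) := by rw [Finset.sum_const, Finset.card_range, smul_eq_mul]
      _ ≤ (C₁ + L + 1) * W^(d₁+1) := by
          have hW1 : 1 ≤ W := by omega
          have h2 : W ≤ W^(d₁+1) := Nat.le_self_pow (by omega) _
          have h3 : W * W^d₁ = W^(d₁+1) := by rw [pow_succ]; ring
          nlinarith
  calc (countIn SL 1 N)^d₂ ≤ ((C₁ + L + 1) * W^(d₁+1))^d₂ := Nat.pow_le_pow_left hcard _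
    _ = (C₁ + L + 1)^d₂ * (W^(d₁+1))^d₂ := by rw [mul_pow]
    _ ≤ (C₁ + L + 1)^d₂ * (W^d₂)^(d₂-1) := by
        apply Nat.mul_le_mul_left
        rw [← pow_mul, ← pow_mul]
        exact Nat.pow_le_pow_right (by omega) (by
          have : d₁ + 1 ≤ d₂ - 1 := by omega
          calc (d₁+1)*d₂ ≤ (d₂-1)*d₂ := Nat.mul_le_mul_right _ this
            _ = d₂*(d₂-1) := Nat.mul_comm _ _)
    _ ≤ (C₁ + L + 1)^d₂ * (C₆*N)^(d₂-1) := Nat.mul_le_mul_left _ (Nat.pow_le_pow_left hWpow _)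
    _ = ((C₁ + L + 1)^d₂ * C₆^(d₂-1)) * N^(d₂-1) := by rw [mul_pow]; ring
    _ ≤ ((C₁ + L + 1)^d₂ * C₆^(d₂-1) + 1) * N^(d₂-1) := Nat.mul_le_mul_right _ (by omega)

lemma count_to_zero (p₁ p₂ : Polynomial ℤ)
    (hlead₂ : 0 < p₂.leadingCoeff)
    (hdeg : p₁.natDegree + 2 ≤ p₂.natDegree)
    (hpos : ∀ n : ℕ, 1 ≤ p₁.eval (n : ℤ) ∧ p₁.eval (n : ℤ) ≤ p₂.eval (n : ℤ))
    (L : ℕ) :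
    Tendsto (fun N : ℕ => (countIn {m : ℕ | ∃ j : ℕ,
          p₂.eval (j : ℤ) - p₁.eval (j : ℤ) - L ≤ (m : ℤ) ∧ (m : ℤ) ≤ p₂.eval (j : ℤ)} 1 N : ℝ)
        / N) atTop (𝓝 0) := by
  obtain ⟨C, hCpos, hC⟩ := count_bound p₁ p₂ hlead₂ hdeg hpos L
  set d₂ := p₂.natDegree with hd₂
  have hd₂pos : 1 ≤ d₂ := by omega
  set SL : Set ℕ := {m : ℕ | ∃ j : ℕ,
      p₂.eval (j : ℤ) - p₁.eval (j : ℤ) - L ≤ (m : ℤ) ∧ (m : ℤ) ≤ p₂.eval (j : ℤ)} with hSL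
  rw [Metric.tendsto_atTop]
  intro ε hε
  have hεpow : 0 < ε ^ d₂ := pow_pos hε _
  obtain ⟨N₀, hN₀⟩ := exists_nat_gt ((C : ℝ) / ε ^ d₂)
  refine ⟨max (max L 1) N₀, fun N hN => ?_⟩
  have hLN : L ≤ N := le_trans (le_max_left _ _) (le_trans (le_max_left _ _) hN)
  have h1N : 1 ≤ N := le_trans (le_max_right _ _) (le_trans (le_max_left _ _) hN)
  have hN₀N : N₀ ≤ N := le_trans (le_max_right _ _) hN
  have hb := hC N hLN h1N
  have hNpos : (0:ℝ) < N := by exact_mod_cast h1N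
  set x : ℝ := (countIn SL 1 N : ℝ) / N with hx
  have hx0 : 0 ≤ x := by positivity
  rw [Real.dist_eq, sub_zero, abs_of_nonneg hx0]
  by_contra hcon
  push_neg at hcon
  have hxpow : ε ^ d₂ ≤ x ^ d₂ := pow_le_pow_left₀ hε.le hcon _
  have h2 : ((countIn SL 1 N : ℝ)) ^ d₂ ≤ (C : ℝ) * (N:ℝ) ^ (d₂ - 1) := by exact_mod_cast hb
  have h3 : x ^ d₂ ≤ (C : ℝ) / N := by
    rw [hx, div_pow]
    rw [div_le_div_iff₀ (by positivity) hNpos]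
    calc ((countIn SL 1 N : ℝ)) ^ d₂ * (N:ℝ)
        ≤ ((C : ℝ) * (N:ℝ) ^ (d₂ - 1)) * (N:ℝ) :=
          mul_le_mul_of_nonneg_right h2 hNpos.le
      _ = (C:ℝ) * (N:ℝ) ^ d₂ := by
          rw [mul_assoc, ← pow_succ]
          congr 2
          omega
  have h4 : (C : ℝ) / N < ε ^ d₂ := by
    rw [div_lt_iff₀ hNpos]
    have : (C : ℝ) / ε ^ d₂ < (N : ℝ) := lt_of_lt_of_le hN₀ (by exact_mod_cast hN₀N)
    calc (C:ℝ) = ((C:ℝ) / ε^d₂) * ε^d₂ := by field_simp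
      _ < (N:ℝ) * ε^d₂ := by exact mul_lt_mul_of_pos_right this hεpow
      _ = ε^d₂ * N := by ring
  linarith

lemma generic_transfer (ξ ξ' : Omega) (μ : Measure Omega)
    (hbad : ∀ L : ℕ, Tendsto (fun N : ℕ =>
      (((Finset.range N).filter
        (fun n => ∃ k, k < L ∧ ξ (n+k) ≠ ξ' (n+k))).card : ℝ) / N) atTop (𝓝 0))
    (hgen : IsGeneric ξ μ) : IsGeneric ξ' μ := by
  classical
  intro f
  have hgf := hgen f
  have hdiff : Tendsto (fun N : ℕ =>
      (∑ n ∈ Finset.range N, f (shift^[n] ξ')) / N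
      - (∑ n ∈ Finset.range N, f (shift^[n] ξ)) / N) atTop (𝓝 0) := by
    rw [NormedAddCommGroup.tendsto_nhds_zero]
    intro ε hε
    obtain ⟨M, hM⟩ := IsCompact.exists_bound_of_continuousOn isCompact_univ
      f.continuous.continuousOn
    set M' : ℝ := max M 1 with hM'
    have hM'pos : 0 < M' := lt_of_lt_of_le one_pos (le_max_right _ _)
    have hMb : ∀ ω : Omega, |f ω| ≤ M' :=
      fun ω => le_trans (hM ω (Set.mem_univ ω)) (le_max_left _ _)
    obtain ⟨L, hL⟩ := window_bound f (by positivity : (0:ℝ) < ε/3)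
    set c : ℝ := ε / (3 * (2*M'+1)) with hc
    have hcpos : 0 < c := by positivity
    filter_upwards [(hbad L).eventually_lt_const hcpos, eventually_ge_atTop 1] with N hN2 hN1
    set Bad : Finset ℕ := (Finset.range N).filter
      (fun n => ∃ k, k < L ∧ ξ (n+k) ≠ ξ' (n+k)) with hBad
    have hNpos : (0:ℝ) < N := by exact_mod_cast hN1
    have hterm : ∀ n ∈ Finset.range N,
        |f (shift^[n] ξ') - f (shift^[n] ξ)| ≤ ε/3 + (if n ∈ Bad then 2*M' else 0) := by
      intro n hn
      by_cases hb : n ∈ Bad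
      · rw [if_pos hb]
        have := abs_sub (f (shift^[n] ξ')) (f (shift^[n] ξ))
        have h1 := hMb (shift^[n] ξ')
        have h2 := hMb (shift^[n] ξ)
        calc |f (shift^[n] ξ') - f (shift^[n] ξ)|
            ≤ |f (shift^[n] ξ')| + |f (shift^[n] ξ)| := abs_sub _ _
          _ ≤ M' + M' := add_le_add h1 h2
          _ ≤ ε/3 + 2*M' := by linarith
      · rw [if_neg hb]
        simp only [hBad, Finset.mem_filter, not_and] at hb
        have hgood : ∀ k, k < L → ξ (n+k) = ξ' (n+k) := by
          intro k hk
          by_contra hne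
          exact (hb hn) ⟨k, hk, hne⟩
        have hagree : ∀ k < L, (shift^[n] ξ') k = (shift^[n] ξ) k := by
          intro k hk
          rw [shift_iter, shift_iter, Nat.add_comm k n]
          exact (hgood k hk).symm
        simpa using hL _ _ hagree
    have hsum : |∑ n ∈ Finset.range N, (f (shift^[n] ξ') - f (shift^[n] ξ))|
        ≤ (N:ℝ)*(ε/3) + (Bad.card:ℝ)*(2*M') := by
      calc |∑ n ∈ Finset.range N, (f (shift^[n] ξ') - f (shift^[n] ξ))|
          ≤ ∑ n ∈ Finset.range N, |f (shift^[n] ξ') - f (shift^[n] ξ)| :=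
            Finset.abs_sum_le_sum_abs _ _
        _ ≤ ∑ n ∈ Finset.range N, (ε/3 + (if n ∈ Bad then 2*M' else 0)) :=
            Finset.sum_le_sum hterm
        _ = (N:ℝ)*(ε/3) + ∑ n ∈ Finset.range N, (if n ∈ Bad then 2*M' else 0) := by
            rw [Finset.sum_add_distrib, Finset.sum_const, Finset.card_range]
            simp [mul_comm]
        _ = (N:ℝ)*(ε/3) + (Bad.card:ℝ)*(2*M') := by
            congr 1
            rw [Finset.sum_ite_mem, Finset.inter_eq_right.mpr (Finset.filter_subset _ _),
              Finset.sum_const, nsmul_eq_mul]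
    rw [div_sub_div_same, ← Finset.sum_sub_distrib, Real.norm_eq_abs, abs_div,
      Nat.abs_cast]
    have h7 : |∑ n ∈ Finset.range N, (f (shift^[n] ξ') - f (shift^[n] ξ))| / N
        ≤ ε/3 + (2*M')*((Bad.card:ℝ)/N) := by
      calc |∑ n ∈ Finset.range N, (f (shift^[n] ξ') - f (shift^[n] ξ))| / N
          ≤ ((N:ℝ)*(ε/3) + (Bad.card:ℝ)*(2*M'))/N := by gcongr
        _ = ε/3 + (2*M')*((Bad.card:ℝ)/N) := by field_simp
    have h8 : (2*M')*((Bad.card:ℝ)/N) < (2*M')*c :=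
      mul_lt_mul_of_pos_left hN2 (by linarith)
    have h9 : (2*M')*c ≤ ε/3 := by
      rw [hc, mul_div_assoc']
      rw [div_le_div_iff₀ (by positivity) (by norm_num : (0:ℝ) < 3)]
      nlinarith
    linarith
  have := hdiff.add hgf
  simpa using this

def cylFun (L : ℕ) (v : Fin L → Bool) : C(Omega, ℝ) :=
  ⟨fun ω => ∏ k : Fin L, (if ω k = v k then (1:ℝ) else 0), by
    apply continuous_finset_prod
    intro k _
    exact (continuous_of_discreteTopology
      (f := fun b : Bool => if b = v k then (1:ℝ) else 0)).comp (continuous_apply (k : ℕ))⟩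

def CylF (L : ℕ) (v : Fin L → Bool) : Set Omega := {ω | ∀ k : Fin L, ω k = v k}

lemma cylFun_eq (L : ℕ) (v : Fin L → Bool) (ω : Omega) :
    cylFun L v ω = Set.indicator (CylF L v) (fun _ => (1:ℝ)) ω := by
  classical
  show (∏ k : Fin L, (if ω k = v k then (1:ℝ) else 0)) = _
  by_cases h : ω ∈ CylF L v
  · rw [Set.indicator_of_mem h]
    exact Finset.prod_eq_one fun k _ => by rw [if_pos (h k)]
  · rw [Set.indicator_of_notMem h]
    obtain ⟨k, hk⟩ : ∃ k : Fin L, ω k ≠ v k := by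
      by_contra hc; push_neg at hc; exact h hc
    exact Finset.prod_eq_zero (Finset.mem_univ k) (by rw [if_neg hk])

lemma measurable_CylF (L : ℕ) (v : Fin L → Bool) : MeasurableSet (CylF L v) := by
  have : CylF L v = ⋂ k : Fin L, (fun ω : Omega => ω k) ⁻¹' {v k} := by
    ext ω; simp [CylF]
  rw [this]
  exact MeasurableSet.iInter fun k =>
    (measurable_pi_apply (k : ℕ)) (measurableSet_singleton _)

lemma generic_support (ξ' : Omega) (μ : Measure Omega) [IsProbabilityMeasure μ]
    (hgen : IsGeneric ξ' μ) : μ (orbitClosure ξ') = 1 := by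
  classical
  have hFclosed : IsClosed (orbitClosure ξ') := isClosed_closure
  rw [← prob_compl_eq_zero_iff hFclosed.measurableSet]
  set U : Set Omega := (orbitClosure ξ')ᶜ with hU
  have hUopen : IsOpen U := hFclosed.isOpen_compl
  -- each cylinder inside U has measure zero
  have hcyl0 : ∀ (L : ℕ) (v : Fin L → Bool), CylF L v ⊆ U → μ (CylF L v) = 0 := by
    intro L v hsub
    have horb : ∀ n : ℕ, cylFun L v (shift^[n] ξ') = 0 := by
      intro n
      rw [cylFun_eq]
      apply Set.indicator_of_notMem
      intro hmem
      exact (hsub hmem) (subset_closure ⟨n, rfl⟩)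
    have havg : Tendsto (fun N : ℕ =>
        (∑ n ∈ Finset.range N, cylFun L v (shift^[n] ξ')) / N) atTop (𝓝 0) := by
      have : ∀ N : ℕ, (∑ n ∈ Finset.range N, cylFun L v (shift^[n] ξ')) / N = 0 := by
        intro N
        rw [Finset.sum_congr rfl fun n _ => horb n]
        simp
      simp only [this]
      exact tendsto_const_nhds
    have hint : ∫ x, cylFun L v x ∂μ = 0 := tendsto_nhds_unique (hgen (cylFun L v)) havg
    have hint2 : ∫ x, cylFun L v x ∂μ = (μ (CylF L v)).toReal := by
      simp only [cylFun_eq]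
      rw [integral_indicator_const (1:ℝ) (measurable_CylF L v)]
      simp [measureReal_def]
    rw [hint] at hint2
    have hne : μ (CylF L v) ≠ ⊤ := measure_ne_top μ _
    exact (ENNReal.toReal_eq_zero_iff _).mp hint2.symm |>.resolve_right hne
  -- cover U by such cylinders
  have hcover : U ⊆ ⋃ i : {i : Σ L : ℕ, Fin L → Bool // CylF i.1 i.2 ⊆ U}, CylF i.1.1 i.1.2 := by
    intro ω hω
    obtain ⟨L, hL⟩ := exists_cyl_subset hUopen hω
    have hEq : CylF L (fun k : Fin L => ω k) = Cyl ω L := by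
      ext ω'
      constructor
      · intro h k hk; exact h ⟨k, hk⟩
      · intro h k; exact h k k.2
    refine Set.mem_iUnion.mpr ⟨⟨⟨L, fun k => ω k⟩, ?_⟩, fun k => rfl⟩
    rw [hEq]; exact hL
  exact measure_mono_null hcover (measure_iUnion_null fun i => hcyl0 i.1.1 i.1.2 i.2)


lemma countIn_mono {S T : Set ℕ} (h : S ⊆ T) (a b : ℕ) : countIn S a b ≤ countIn T a b := by
  classical
  unfold countIn
  apply Finset.card_le_card
  intro m hm
  rw [Finset.mem_filter] at hm ⊢
  exact ⟨hm.1, h hm.2⟩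

lemma countIn_le_add {S T U : Set ℕ} (h : ∀ m, m ∈ U → m ∈ S ∨ m ∈ T) (a b : ℕ) :
    countIn U a b ≤ countIn S a b + countIn T a b := by
  classical
  unfold countIn
  refine le_trans (Finset.card_le_card (fun m hm => ?_)) (Finset.card_union_le _ _)
  have hm' := Finset.mem_filter.mp hm
  rcases h m hm'.2 with h' | h'
  · exact Finset.mem_union.mpr (Or.inl (Finset.mem_filter.mpr ⟨hm'.1, h'⟩))
  · exact Finset.mem_union.mpr (Or.inr (Finset.mem_filter.mpr ⟨hm'.1, h'⟩))

lemma card_le_countIn (s : Finset ℕ) (S : Set ℕ) (N : ℕ)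
    (h : ∀ n ∈ s, n ∈ S) (h2 : ∀ n ∈ s, n ≤ N) : s.card ≤ 1 + countIn S 1 N := by
  classical
  unfold countIn
  have hsub : s ⊆ insert 0 ((Finset.Icc 1 N).filter (fun m => m ∈ S)) := by
    intro n hn
    rcases Nat.eq_zero_or_pos n with h0 | hpos
    · exact Finset.mem_insert.mpr (Or.inl h0)
    · refine Finset.mem_insert.mpr (Or.inr ?_)
      rw [Finset.mem_filter, Finset.mem_Icc]
      exact ⟨⟨hpos, h2 n hn⟩, h n hn⟩
  calc s.card ≤ _ := Finset.card_le_card hsub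
    _ ≤ _ + 1 := Finset.card_insert_le _ _
    _ = 1 + _ := Nat.add_comm _ _

/-- **Remark (necessity of degree restrictions).** If `A` is a WM set and `p_1, p_2 ∈ ℤ[n]`
have positive leading coefficients with `deg p_1 ≤ deg p_2 − 2` and `p_2(n) ≥ p_1(n) ≥ 1`
for all `n`, then `A' = A \ ⋃_n [p_2(n) − p_1(n), p_2(n)]` is a WM set within which the
system `x + y_1 = p_1(z)`, `x + y_2 = p_2(z)` has no solution. -/
theorem WM_remove_progressions_kills_system
    (A : Set ℕ) (hA : IsWMSet A) (p₁ p₂ : Polynomial ℤ)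
    (hlead₁ : 0 < p₁.leadingCoeff) (hlead₂ : 0 < p₂.leadingCoeff)
    (hdeg : p₁.natDegree + 2 ≤ p₂.natDegree)
    (hpos : ∀ n : ℕ, 1 ≤ p₁.eval (n : ℤ) ∧ p₁.eval (n : ℤ) ≤ p₂.eval (n : ℤ)) :
    IsWMSet (A \ ⋃ n : ℕ, {m : ℕ |
        p₂.eval (n : ℤ) - p₁.eval (n : ℤ) ≤ (m : ℤ) ∧ (m : ℤ) ≤ p₂.eval (n : ℤ)}) ∧
    ¬ ∃ (z x y₁ y₂ : ℕ),
        x ∈ (A \ ⋃ n : ℕ, {m : ℕ |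
          p₂.eval (n : ℤ) - p₁.eval (n : ℤ) ≤ (m : ℤ) ∧ (m : ℤ) ≤ p₂.eval (n : ℤ)}) ∧
        y₁ ∈ (A \ ⋃ n : ℕ, {m : ℕ |
          p₂.eval (n : ℤ) - p₁.eval (n : ℤ) ≤ (m : ℤ) ∧ (m : ℤ) ≤ p₂.eval (n : ℤ)}) ∧
        y₂ ∈ (A \ ⋃ n : ℕ, {m : ℕ |
          p₂.eval (n : ℤ) - p₁.eval (n : ℤ) ≤ (m : ℤ) ∧ (m : ℤ) ≤ p₂.eval (n : ℤ)}) ∧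
        (x : ℤ) + (y₁ : ℤ) = p₁.eval (z : ℤ) ∧
        (x : ℤ) + (y₂ : ℤ) = p₂.eval (z : ℤ) := by
  classical
  set Bset : Set ℕ := ⋃ n : ℕ, {m : ℕ |
      p₂.eval (n : ℤ) - p₁.eval (n : ℤ) ≤ (m : ℤ) ∧ (m : ℤ) ≤ p₂.eval (n : ℤ)} with hBset
  constructor
  · -- A \ Bset is a WM set
    obtain ⟨⟨δ, hδpos, hdens⟩, μ, hPM, hsupp, hgen, herg⟩ := hA
    haveI := hPM
    have hdiff : ∀ m : ℕ, indicatorSeq A m ≠ indicatorSeq (A \ Bset) m → m ∈ Bset := by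
      intro m hm
      by_contra hmB
      apply hm
      unfold indicatorSeq
      rw [decide_eq_decide]
      exact ⟨fun h => ⟨h, hmB⟩, fun h => h.1⟩
    have hSL : ∀ (L : ℕ) (m : ℕ), m ∈ Bset → m ∈ {m : ℕ | ∃ j : ℕ,
        p₂.eval (j : ℤ) - p₁.eval (j : ℤ) - (L:ℤ) ≤ (m : ℤ) ∧ (m : ℤ) ≤ p₂.eval (j : ℤ)} := by
      intro L m hm
      obtain ⟨j, h1, h2⟩ := Set.mem_iUnion.mp hm
      refine ⟨j, ?_, h2⟩
      push_cast
      linarith [h1]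
    have hbad : ∀ L : ℕ, Tendsto (fun N : ℕ =>
        (((Finset.range N).filter (fun n => ∃ k, k < L ∧
          indicatorSeq A (n+k) ≠ indicatorSeq (A \ Bset) (n+k))).card : ℝ) / N) atTop (𝓝 0) := by
      intro L
      have hzero := count_to_zero p₁ p₂ hlead₂ hdeg hpos L
      have hcardle : ∀ N : ℕ,
          ((Finset.range N).filter (fun n => ∃ k, k < L ∧
            indicatorSeq A (n+k) ≠ indicatorSeq (A \ Bset) (n+k))).card
          ≤ 1 + countIn {m : ℕ | ∃ j : ℕ,
            p₂.eval (j : ℤ) - p₁.eval (j : ℤ) - (L:ℤ) ≤ (m : ℤ) ∧ (m : ℤ) ≤ p₂.eval (j : ℤ)} 1 N := by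
        intro N
        apply card_le_countIn
        · intro n hn
          rw [Finset.mem_filter] at hn
          obtain ⟨_, k, hkL, hne⟩ := hn
          obtain ⟨j, h1, h2⟩ := Set.mem_iUnion.mp (hdiff _ hne)
          refine ⟨j, ?_, ?_⟩
          · have ha : p₂.eval (j:ℤ) - p₁.eval (j:ℤ) ≤ ((n:ℤ) + k) := by exact_mod_cast h1
            have hk : (k:ℤ) ≤ L := by exact_mod_cast hkL.le
            linarith
          · have ha : ((n:ℤ) + k) ≤ p₂.eval (j:ℤ) := by exact_mod_cast h2
            have hk : (0:ℤ) ≤ (k:ℤ) := Int.ofNat_nonneg _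
            linarith
        · intro n hn
          rw [Finset.mem_filter, Finset.mem_range] at hn
          exact hn.1.le
      refine squeeze_zero (fun N => by positivity) (fun N => ?_) (g := fun N : ℕ =>
        (1 + (countIn {m : ℕ | ∃ j : ℕ,
          p₂.eval (j : ℤ) - p₁.eval (j : ℤ) - (L:ℤ) ≤ (m : ℤ) ∧ (m : ℤ) ≤ p₂.eval (j : ℤ)} 1 N : ℝ))/N) ?_
      · exact div_le_div_of_nonneg_right (by exact_mod_cast hcardle N) (Nat.cast_nonneg N)
      · have h2 : (fun N : ℕ => (1 + (countIn {m : ℕ | ∃ j : ℕ,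
            p₂.eval (j : ℤ) - p₁.eval (j : ℤ) - (L:ℤ) ≤ (m : ℤ) ∧ (m : ℤ) ≤ p₂.eval (j : ℤ)} 1 N : ℝ))/N)
            = fun N : ℕ => 1/(N:ℝ) + (countIn {m : ℕ | ∃ j : ℕ,
            p₂.eval (j : ℤ) - p₁.eval (j : ℤ) - (L:ℤ) ≤ (m : ℤ) ∧ (m : ℤ) ≤ p₂.eval (j : ℤ)} 1 N : ℝ)/(N:ℝ) := by
          funext N
          rw [add_div]
        rw [h2]
        simpa using Filter.Tendsto.add tendsto_one_div_atTop_nhds_zero_nat hzero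
    have hgen' : IsGeneric (indicatorSeq (A \ Bset)) μ :=
      generic_transfer _ _ μ hbad hgen
    refine ⟨⟨δ, hδpos, ?_⟩, μ, hPM, generic_support _ μ hgen', hgen', herg⟩
    have hupper : ∀ N, countIn (A \ Bset) 1 N ≤ countIn A 1 N :=
      fun N => countIn_mono Set.diff_subset 1 N
    have hzero0 := count_to_zero p₁ p₂ hlead₂ hdeg hpos 0
    have hlower : ∀ N, countIn A 1 N ≤ countIn (A \ Bset) 1 N
        + countIn {m : ℕ | ∃ j : ℕ,
          p₂.eval (j : ℤ) - p₁.eval (j : ℤ) - ((0:ℕ):ℤ) ≤ (m : ℤ) ∧ (m : ℤ) ≤ p₂.eval (j : ℤ)} 1 N := by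
      intro N
      refine countIn_le_add (fun m hm => ?_) 1 N
      by_cases hB : m ∈ Bset
      · exact Or.inr (hSL 0 m hB)
      · exact Or.inl ⟨hm, hB⟩
    unfold HasDensity
    refine tendsto_of_tendsto_of_tendsto_of_le_of_le
      (g := fun N : ℕ => (countIn A 1 N : ℝ)/N - (countIn {m : ℕ | ∃ j : ℕ,
        p₂.eval (j : ℤ) - p₁.eval (j : ℤ) - ((0:ℕ):ℤ) ≤ (m : ℤ) ∧ (m : ℤ) ≤ p₂.eval (j : ℤ)} 1 N : ℝ)/N)
      (h := fun N : ℕ => (countIn A 1 N : ℝ)/N) ?_ hdens ?_ ?_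
    · simpa using hdens.sub hzero0
    · intro N
      dsimp only
      rw [← sub_div]
      refine div_le_div_of_nonneg_right ?_ (Nat.cast_nonneg N)
      have hc : (countIn A 1 N : ℝ) ≤ (countIn (A \ Bset) 1 N : ℝ)
          + (countIn {m : ℕ | ∃ j : ℕ,
            p₂.eval (j : ℤ) - p₁.eval (j : ℤ) - ((0:ℕ):ℤ) ≤ (m : ℤ) ∧ (m : ℤ) ≤ p₂.eval (j : ℤ)} 1 N : ℝ) := by
        exact_mod_cast hlower N
      linarith
    · intro N
      dsimp only
      exact div_le_div_of_nonneg_right (by exact_mod_cast hupper N) (Nat.cast_nonneg N)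
  · rintro ⟨z, x, y₁, y₂, hx, hy₁, hy₂, e₁, e₂⟩
    have hy₁0 : (0:ℤ) ≤ (y₁:ℤ) := Int.ofNat_nonneg _
    have hx0 : (0:ℤ) ≤ (x:ℤ) := Int.ofNat_nonneg _
    apply hy₂.2
    apply Set.mem_iUnion.mpr
    exact ⟨z, by constructor <;> [linarith; linarith]⟩
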